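/- If a strategy σ_i ∈ NSD_i^k(Γ) is minimax dominated with respect to NSD_{-i}^k(Γ) by some strategy σ'_i ∈ Σ_i (possibly already deleted), then σ_i is minimax dominated with respect to NSD_{-i}^k(Γ) by some strategy in NSD_i^k(Γ). Hence the deletion procedure is unchanged if dominating strategies are required to come from the surviving set. -/

import Mathlib

open Function

section
variable {ι : Type*} [DecidableEq ι] {S : ι → Type*}

noncomputable def minv (u : ι → (∀ j, S j) → ℝ) (i : ι) (T : Set (∀ j, S j)) (σ : S i) : ℝ :=
  sInf ((fun τ => u i (Function.update τ i σ)) '' T)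

noncomputable def maxv (u : ι → (∀ j, S j) → ℝ) (i : ι) (T : Set (∀ j, S j)) (σ : S i) : ℝ :=
  sSup ((fun τ => u i (Function.update τ i σ)) '' T)

/-- `σ'` minimax dominates `σ` for player `i` w.r.t. opponent profile set `T`. -/
def MMDomBy (u : ι → (∀ j, S j) → ℝ) (i : ι) (T : Set (∀ j, S j)) (σ σ' : S i) : Prop :=
  minv u i T σ' > maxv u i T σ

def MMDom (u : ι → (∀ j, S j) → ℝ) (i : ι) (T : Set (∀ j, S j)) (σ : S i) : Prop :=
  ∃ σ' : S i, MMDomBy u i T σ σ'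

/-- Opponent profiles of player `i` compatible with the product set `Z`. -/
def Opp (Z : ∀ j, Set (S j)) (i : ι) : Set (∀ j, S j) := {τ | ∀ j, j ≠ i → τ j ∈ Z j}

/-- Iterated deletion of minimax dominated strategies. -/
noncomputable def NSD (u : ι → (∀ j, S j) → ℝ) : ℕ → ∀ i, Set (S i)
  | 0, _ => Set.univ
  | (k+1), i => {σ ∈ NSD u k i | ¬ MMDom u i (Opp (NSD u k) i) σ}

variable {ι : Type*} [Fintype ι] [DecidableEq ι] {S : ι → Type*}
  [∀ i, Fintype (S i)] [∀ i, Nonempty (S i)]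

lemma NSD_antitone' (u : ι → (∀ j, S j) → ℝ) {m n : ℕ} (h : m ≤ n) (j : ι) :
    NSD u n j ⊆ NSD u m j := by
  induction h with
  | refl => exact subset_rfl
  | step _ ih => exact fun σ hσ => ih hσ.1

lemma Opp_antitone' (u : ι → (∀ j, S j) → ℝ) {m n : ℕ} (h : m ≤ n) (j : ι) :
    Opp (NSD u n) j ⊆ Opp (NSD u m) j :=
  fun τ hτ j' hj' => NSD_antitone' u h j' (hτ j' hj')

lemma img_finite (u : ι → (∀ j, S j) → ℝ) (j : ι) (T : Set (∀ j, S j)) (ρ : S j) :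
    ((fun τ => u j (Function.update τ j ρ)) '' T).Finite :=
  (Set.toFinite T).image _

lemma minv_le_maxv (u : ι → (∀ j, S j) → ℝ) (j : ι) {T : Set (∀ j, S j)}
    (hT : T.Nonempty) (ρ : S j) : minv u j T ρ ≤ maxv u j T ρ :=
  csInf_le_csSup (hT.image _) (img_finite u j T ρ).bddBelow (img_finite u j T ρ).bddAbove

lemma minv_anti (u : ι → (∀ j, S j) → ℝ) (j : ι) {T T' : Set (∀ j, S j)}
    (hT : T.Nonempty) (hTT : T ⊆ T') (ρ : S j) : minv u j T' ρ ≤ minv u j T ρ :=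
  csInf_le_csInf (img_finite u j T' ρ).bddBelow (hT.image _) (Set.image_mono hTT)

lemma maxv_mono (u : ι → (∀ j, S j) → ℝ) (j : ι) {T T' : Set (∀ j, S j)}
    (hT : T.Nonempty) (hTT : T ⊆ T') (ρ : S j) : maxv u j T ρ ≤ maxv u j T' ρ :=
  csSup_le_csSup (img_finite u j T' ρ).bddAbove (hT.image _) (Set.image_mono hTT)

/-- Any maximizer of `minv` w.r.t. the level-`k` opponent set survives all rounds `≤ k+1`. -/
lemma argmax_survives (u : ι → (∀ j, S j) → ℝ) (k : ℕ) (j : ι)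
    (hT : (Opp (NSD u k) j).Nonempty) (σs : S j)
    (hmax : ∀ ρ : S j, minv u j (Opp (NSD u k) j) ρ ≤ minv u j (Opp (NSD u k) j) σs) :
    ∀ m, m ≤ k + 1 → σs ∈ NSD u m j := by
  intro m
  induction m with
  | zero => intro _; trivial
  | succ m ih =>
    intro hm
    have hmk : m ≤ k := Nat.lt_succ_iff.mp hm
    refine ⟨ih (le_trans hmk (Nat.le_succ k)), ?_⟩
    rintro ⟨ρ, hρ⟩
    have hsub : Opp (NSD u k) j ⊆ Opp (NSD u m) j := Opp_antitone' u hmk j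
    have h1 : minv u j (Opp (NSD u k) j) σs ≤ maxv u j (Opp (NSD u k) j) σs :=
      minv_le_maxv u j hT σs
    have h2 : maxv u j (Opp (NSD u k) j) σs ≤ maxv u j (Opp (NSD u m) j) σs :=
      maxv_mono u j hT hsub σs
    have h3 : minv u j (Opp (NSD u m) j) ρ ≤ minv u j (Opp (NSD u k) j) ρ :=
      minv_anti u j hT hsub ρ
    have := hmax ρ
    have : maxv u j (Opp (NSD u m) j) σs < maxv u j (Opp (NSD u m) j) σs := by
      calc maxv u j (Opp (NSD u m) j) σs < minv u j (Opp (NSD u m) j) ρ := hρ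
        _ ≤ minv u j (Opp (NSD u k) j) ρ := h3
        _ ≤ minv u j (Opp (NSD u k) j) σs := hmax ρ
        _ ≤ maxv u j (Opp (NSD u k) j) σs := h1
        _ ≤ maxv u j (Opp (NSD u m) j) σs := h2
    exact lt_irrefl _ this

lemma NSD_nonempty (u : ι → (∀ j, S j) → ℝ) : ∀ k, ∀ j : ι, (NSD u k j).Nonempty := by
  intro k
  induction k with
  | zero => intro j; exact Set.univ_nonempty
  | succ k ih =>
    intro j
    have hT : (Opp (NSD u k) j).Nonempty := by
      refine ⟨fun j' => (ih j').some, fun j' _ => (ih j').some_mem⟩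
    obtain ⟨σs, hσs⟩ := Finite.exists_max (minv u j (Opp (NSD u k) j))
    exact ⟨σs, argmax_survives u k j hT σs hσs (k + 1) le_rfl⟩

lemma Opp_NSD_nonempty (u : ι → (∀ j, S j) → ℝ) (k : ℕ) (j : ι) :
    (Opp (NSD u k) j).Nonempty :=
  ⟨fun j' => (NSD_nonempty u k j').some, fun j' _ => (NSD_nonempty u k j').some_mem⟩

theorem dominating_strategy_in_surviving_set (u : ι → (∀ j, S j) → ℝ) (i : ι) (k : ℕ)
    (σ : S i) (hσ : σ ∈ NSD u k i) (σ' : S i)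
    (hdom : MMDomBy u i (Opp (NSD u k) i) σ σ') :
    ∃ σ'' ∈ NSD u k i, MMDomBy u i (Opp (NSD u k) i) σ σ'' := by
  have hT : (Opp (NSD u k) i).Nonempty := Opp_NSD_nonempty u k i
  obtain ⟨σ'', hmax⟩ := Finite.exists_max (minv u i (Opp (NSD u k) i))
  refine ⟨σ'', argmax_survives u k i hT σ'' hmax k (Nat.le_succ k), ?_⟩
  exact lt_of_lt_of_le hdom (hmax σ')

end
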